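/- Let m = 4t, t ≥ 3, n = 2t, ω a primitive m-th root of unity, and let J = {(i,k) : 1 ≤ i ≤ n−1, 1 ≤ k ≤ m−1, ω^{ik} = −1}. If (i,k), (p,q) ∈ J satisfy ω^{iq + pk} = 1, then ω^{pk} = −1 and ω^{iq} = −1. -/
import Mathlib

lemma key_dvd (t u v W : ℕ) (ht : 0 < t) (hu : u ≠ 0) (hv : v ≠ 0)
    (hsum : 4 * t ∣ u + v) (hprod : u * v = (2 * t) ^ 2 * W) :
    2 * t ∣ u := by
  have h2t : 2 * t ≠ 0 := by positivity
  have hW : W ≠ 0 := by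
    rintro rfl
    simp at hprod
    rcases hprod with h | h
    · exact hu h
    · exact hv h
  rw [← Nat.factorization_le_iff_dvd h2t hu, Finsupp.le_def]
  intro p
  by_cases hp : p.Prime
  · by_contra hc
    push_neg at hc
    have h1 : (u*v).factorization p = u.factorization p + v.factorization p := by
      rw [Nat.factorization_mul hu hv]; rfl
    have h2 : (u*v).factorization p
        = 2 * (2*t).factorization p + W.factorization p := by
      rw [hprod, Nat.factorization_mul (pow_ne_zero _ h2t) hW,
        Nat.factorization_pow]
      simp [mul_comm]
    have hf4 : (2*t).factorization p ≤ (4*t).factorization p := by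
      have := (Nat.factorization_le_iff_dvd h2t (by positivity : (4*t) ≠ 0)).mpr
        ⟨2, by ring⟩
      exact this p
    have hd : u.factorization p + 1 ≤ v.factorization p := by omega
    have hdv : p ^ (u.factorization p + 1) ∣ v :=
      (Nat.Prime.pow_dvd_iff_le_factorization hp hv).mpr hd
    have h4t : p ^ (u.factorization p + 1) ∣ 4 * t := by
      apply (Nat.Prime.pow_dvd_iff_le_factorization hp (by positivity)).mpr
      omega
    have hsv : p ^ (u.factorization p + 1) ∣ u := by
      have h1' : p ^ (u.factorization p + 1) ∣ u + v := h4t.trans hsum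
      have := Nat.dvd_sub h1' hdv
      simpa using this
    have := (Nat.Prime.pow_dvd_iff_le_factorization hp hu).mp hsv
    omega
  · simp [Nat.factorization_eq_zero_of_not_prime _ hp]

lemma key (t u v W : ℕ) (ht : 0 < t) (hu : u ≠ 0) (hv : v ≠ 0)
    (hsum : 4 * t ∣ u + v) (hW : Odd W) (hprod : u * v = (2 * t) ^ 2 * W) :
    ∃ r, u = 2 * t + 4 * t * r := by
  obtain ⟨w, hw⟩ := key_dvd t u v W ht hu hv hsum hprod
  obtain ⟨z, hz⟩ := key_dvd t v u W ht hv hu (by rwa [add_comm])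
    (by rwa [mul_comm])
  have hwz : w * z = W := by
    have h1 : (2*t)^2 * (w*z) = (2*t)^2 * W := by rw [← hprod, hw, hz]; ring
    exact Nat.eq_of_mul_eq_mul_left (by positivity) h1
  have hwodd : Odd w := (Nat.odd_mul.mp (hwz ▸ hW)).1
  obtain ⟨r, hr⟩ := hwodd
  exact ⟨r, by rw [hw, hr]; ring⟩

/-- For `(i,k), (p,q) ∈ J` with `ω^(iq+pk) = 1`, one has `ω^(pk) = -1` and
`ω^(iq) = -1`. -/
theorem stmt9 (K : Type*) [Field K] [CharZero K] (t m n : ℕ) (ht : 3 ≤ t)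
    (hm : m = 4 * t) (hn : n = 2 * t) (ω : K) (hω : IsPrimitiveRoot ω m)
    (i k p q : ℕ) (hi1 : 1 ≤ i) (hi2 : i ≤ n - 1) (hk1 : 1 ≤ k) (hk2 : k ≤ m - 1)
    (hp1 : 1 ≤ p) (hp2 : p ≤ n - 1) (hq1 : 1 ≤ q) (hq2 : q ≤ m - 1)
    (hik : ω ^ (i * k) = -1) (hpq : ω ^ (p * q) = -1)
    (h : ω ^ (i * q + p * k) = 1) :
    ω ^ (p * k) = -1 ∧ ω ^ (i * q) = -1 := by
  subst hm hn
  have htpos : 0 < t := by omega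
  have hmpos : 0 < 4 * t := by omega
  -- ω^(2t) = -1
  have h2t : ω ^ (2 * t) = -1 := by
    have hsq : (ω ^ (2 * t)) ^ 2 = 1 := by
      rw [← pow_mul]
      exact (hω.pow_eq_one_iff_dvd _).mpr ⟨1, by ring⟩
    have hne : ω ^ (2 * t) ≠ 1 := by
      intro hh
      have := (hω.pow_eq_one_iff_dvd _).mp hh
      have := Nat.le_of_dvd (by omega) this
      omega
    have : (ω ^ (2*t) - 1) * (ω ^ (2*t) + 1) = 0 := by ring_nf; linear_combination hsq
    rcases mul_eq_zero.mp this with h0 | h0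
    · exact absurd (by linear_combination h0) hne
    · linear_combination h0
  -- exponent form for ik and pq
  have hform : ∀ a b : ℕ, ω ^ (a * b) = -1 → ∃ s, a * b = 2 * t + 4 * t * s := by
    intro a b hab
    have h1 : ω ^ (a * b + 2 * t) = 1 := by rw [pow_add, hab, h2t]; ring
    obtain ⟨s, hs⟩ := (hω.pow_eq_one_iff_dvd _).mp h1
    match s, hs with
    | 0, hs => omega
    | s + 1, hs =>
      refine ⟨s, ?_⟩
      have : 4 * t * (s + 1) = 4 * t * s + 4 * t := by ring
      omega
  obtain ⟨s1, hs1⟩ := hform i k hik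
  obtain ⟨s2, hs2⟩ := hform p q hpq
  have hsum : 4 * t ∣ i * q + p * k := (hω.pow_eq_one_iff_dvd _).mp h
  have hprod : (i * q) * (p * k) = (2 * t) ^ 2 * ((2 * s1 + 1) * (2 * s2 + 1)) := by
    have : (i * q) * (p * k) = (i * k) * (p * q) := by ring
    rw [this, hs1, hs2]; ring
  have hWodd : Odd ((2 * s1 + 1) * (2 * s2 + 1)) := ⟨2*s1*s2 + s1 + s2, by ring⟩
  have hu : i * q ≠ 0 := by positivity
  have hv : p * k ≠ 0 := by positivity
  obtain ⟨r1, hr1⟩ := key t (i*q) (p*k) _ htpos hu hv hsum hWodd hprod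
  obtain ⟨r2, hr2⟩ := key t (p*k) (i*q) _ htpos hv hu (by rwa [add_comm])
    hWodd (by rw [← hprod]; ring)
  have hm1 : ω ^ (4 * t) = 1 := hω.pow_eq_one
  constructor
  · rw [hr2, pow_add, h2t, pow_mul, hm1]; ring
  · rw [hr1, pow_add, h2t, pow_mul, hm1]; ring
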